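/- Let Φ be irreducible, A ∈ 𝓘, and β_A the unique root with (ω̌_α, β_A) = m_α for α ∈ A and minimal in the dominance order among roots in V(A). Then the lattice generated by the roots in the standard parabolic face F(A) is Z(V(A)) = ⟨Δ∖A, β_A⟩_ℤ. -/

import Mathlib

open scoped RealInnerProductSpace Classical
open Finset

/-- A crystallographic reduced root system in a real inner product space. -/
structure IsRootSystem {E : Type*} [NormedAddCommGroup E] [InnerProductSpace ℝ E]
    (Φ : Set E) : Prop where
  finite : Φ.Finite
  nonempty : Φ.Nonempty
  zero_not_mem : (0 : E) ∉ Φ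
  span_eq_top : Submodule.span ℝ Φ = ⊤
  reflection_mem : ∀ α ∈ Φ, ∀ β ∈ Φ, β - (2 * ⟪α, β⟫ / ⟪α, α⟫) • α ∈ Φ
  crystallographic : ∀ α ∈ Φ, ∀ β ∈ Φ, ∃ n : ℤ, 2 * ⟪α, β⟫ / ⟪α, α⟫ = (n : ℝ)
  reduced : ∀ α ∈ Φ, ∀ t : ℝ, t • α ∈ Φ → t = 1 ∨ t = -1

variable {E : Type*} [NormedAddCommGroup E] [InnerProductSpace ℝ E] [FiniteDimensional ℝ E]

/-- The orthogonal reflection in the hyperplane orthogonal to `α`. -/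
noncomputable def sref (α : E) : E ≃ₗᵢ[ℝ] E := Submodule.reflection (ℝ ∙ α)ᗮ

/-- The group generated by the reflections `s_α`, `α ∈ B`. -/
noncomputable def reflSubgroup (B : Set E) : Subgroup (E ≃ₗᵢ[ℝ] E) :=
  Subgroup.closure {w | ∃ α ∈ B, w = sref α}

/-- The Weyl group of `Φ`. -/
noncomputable def WeylGroup (Φ : Set E) : Subgroup (E ≃ₗᵢ[ℝ] E) := reflSubgroup Φ

/-- Connectivity of a set of nodes, two nodes being adjacent when they are not
orthogonal (this is the Dynkin-diagram adjacency for simple roots). -/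
def IsConnectedSet (S : Set E) : Prop :=
  ∀ x ∈ S, ∀ y ∈ S, Relation.ReflTransGen (fun a b => a ∈ S ∧ b ∈ S ∧ ⟪a, b⟫ ≠ 0) x y

/-- The connected component of `x` in `S` for the non-orthogonality adjacency. -/
def component (S : Set E) (x : E) : Set E :=
  {y ∈ S | Relation.ReflTransGen (fun a b => a ∈ S ∧ b ∈ S ∧ ⟪a, b⟫ ≠ 0) x y}


section Aux

variable {E : Type*} [NormedAddCommGroup E] [InnerProductSpace ℝ E] [FiniteDimensional ℝ E]

lemma rs_neg_mem {Φ : Set E} (hΦ : IsRootSystem Φ) {α : E} (hα : α ∈ Φ) : -α ∈ Φ := by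
  have h0 : α ≠ 0 := fun h => hΦ.zero_not_mem (h ▸ hα)
  have h := hΦ.reflection_mem α hα α hα
  have hne : ⟪α, α⟫ ≠ 0 := inner_self_ne_zero.mpr h0
  rw [show (2 * ⟪α, α⟫ / ⟪α, α⟫ : ℝ) = 2 by field_simp] at h
  rwa [show α - (2:ℝ) • α = -α by rw [two_smul]; abel] at h

lemma rs_add_mem {Φ : Set E} (hΦ : IsRootSystem Φ) {α β : E}
    (hα : α ∈ Φ) (hβ : β ∈ Φ) (hneg : ⟪α, β⟫ < 0) (hne : α + β ≠ 0) : α + β ∈ Φ := by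
  have hα0 : α ≠ 0 := fun h => hΦ.zero_not_mem (h ▸ hα)
  have hβ0 : β ≠ 0 := fun h => hΦ.zero_not_mem (h ▸ hβ)
  have hs : (0:ℝ) < ⟪α, α⟫ := by
    rw [real_inner_self_eq_norm_mul_norm]
    exact mul_pos (norm_pos_iff.mpr hα0) (norm_pos_iff.mpr hα0)
  have ht : (0:ℝ) < ⟪β, β⟫ := by
    rw [real_inner_self_eq_norm_mul_norm]
    exact mul_pos (norm_pos_iff.mpr hβ0) (norm_pos_iff.mpr hβ0)
  obtain ⟨n, hn⟩ := hΦ.crystallographic α hα β hβ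
  obtain ⟨k, hk⟩ := hΦ.crystallographic β hβ α hα
  have hns : 2 * ⟪α, β⟫ = (n : ℝ) * ⟪α, α⟫ := by
    field_simp at hn; linarith
  have hkt : 2 * ⟪α, β⟫ = (k : ℝ) * ⟪β, β⟫ := by
    rw [real_inner_comm] at hk; field_simp at hk; linarith
  have hn1 : n ≤ -1 := by
    have h1 : (n : ℝ) < 0 := by nlinarith
    have h2 : n < 0 := by exact_mod_cast h1
    omega
  have hk1 : k ≤ -1 := by
    have h1 : (k : ℝ) < 0 := by nlinarith
    have h2 : k < 0 := by exact_mod_cast h1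
    omega
  have hCS : ⟪α, β⟫ * ⟪α, β⟫ < ⟪α, α⟫ * ⟪β, β⟫ := by
    by_cases hpar : ∃ r : ℝ, β = r • α
    · obtain ⟨r, rfl⟩ := hpar
      rcases hΦ.reduced α hα r hβ with rfl | rfl
      · rw [one_smul] at hneg; linarith
      · rw [neg_smul, one_smul, add_neg_cancel] at hne; exact absurd rfl hne
    · have hnn : ‖α‖ ≠ 0 := norm_ne_zero_iff.mpr hα0
      have hne' : ‖β‖ • (-α) ≠ ‖-α‖ • β := by
        intro h
        apply hpar
        rw [norm_neg] at h
        refine ⟨-(‖α‖⁻¹ * ‖β‖), ?_⟩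
        calc β = ‖α‖⁻¹ • (‖β‖ • -α) := (eq_inv_smul_iff₀ hnn).mpr h.symm
          _ = -(‖α‖⁻¹ * ‖β‖) • α := by module
      have h2 : ⟪-α, β⟫ < ‖-α‖ * ‖β‖ := inner_lt_norm_mul_iff_real.mpr hne'
      rw [inner_neg_left, norm_neg] at h2
      have hα2 : ⟪α, α⟫ = ‖α‖ * ‖α‖ := real_inner_self_eq_norm_mul_norm α
      have hβ2 : ⟪β, β⟫ = ‖β‖ * ‖β‖ := real_inner_self_eq_norm_mul_norm β
      nlinarith [norm_pos_iff.mpr hα0, norm_pos_iff.mpr hβ0]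
  have hnk : (n : ℝ) * k < 4 := by nlinarith
  have hnkZ : n * k < 4 := by exact_mod_cast hnk
  have hcase : n = -1 ∨ k = -1 := by
    by_contra h
    push_neg at h
    have h1 : n ≤ -2 := by omega
    have h2 : k ≤ -2 := by omega
    nlinarith
  rcases hcase with h | h
  · have hr := hΦ.reflection_mem α hα β hβ
    rw [hn, h] at hr
    rwa [show β - ((-1 : ℤ) : ℝ) • α = α + β by push_cast; rw [neg_smul, one_smul]; abel] at hr
  · have hr := hΦ.reflection_mem β hβ α hα
    rw [hk, h] at hr
    rwa [show α - ((-1 : ℤ) : ℝ) • β = α + β by push_cast; rw [neg_smul, one_smul]; abel] at hr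

lemma nat_span_repr (Δ : Finset E) {v : E} (hv : v ∈ AddSubmonoid.closure (↑Δ : Set E)) :
    ∃ c : E → ℕ, v = ∑ α ∈ Δ, (c α : ℝ) • α := by
  induction hv using AddSubmonoid.closure_induction with
  | mem x hx =>
    refine ⟨fun y => if y = x then 1 else 0, ?_⟩
    have hterm : ∀ α, (((if α = x then 1 else 0 : ℕ)) : ℝ) • α = if α = x then α else 0 := by
      intro α; split <;> simp
    simp_rw [hterm]
    rw [Finset.sum_ite_eq' Δ x (fun α => α), if_pos (Finset.mem_coe.mp hx)]
  | zero => exact ⟨0, by simp⟩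
  | add a b ha hb iha ihb =>
    obtain ⟨c1, hc1⟩ := iha
    obtain ⟨c2, hc2⟩ := ihb
    refine ⟨c1 + c2, ?_⟩
    rw [hc1, hc2, ← Finset.sum_add_distrib]
    refine Finset.sum_congr rfl fun α _ => ?_
    rw [Pi.add_apply]
    push_cast
    rw [add_smul]

lemma exists_inner_ne {x z : E} {V : Set E} (hz : z ∈ AddSubgroup.closure V)
    (hxz : ⟪x, z⟫ ≠ 0) : ∃ β ∈ V, ⟪x, β⟫ ≠ 0 := by
  by_contra h
  push_neg at h
  apply hxz
  let K : AddSubgroup E :=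
    { carrier := {v | ⟪x, v⟫ = 0}
      zero_mem' := inner_zero_right x
      add_mem' := fun {a b} ha hb => by
        simp only [Set.mem_setOf_eq] at *
        rw [inner_add_right, ha, hb, add_zero]
      neg_mem' := fun {a} ha => by
        simp only [Set.mem_setOf_eq] at *
        rw [inner_neg_right, ha, neg_zero] }
  exact (AddSubgroup.closure_le K).mpr (fun β hβ => h β hβ) hz

end Aux

/-- Let `Φ` be irreducible with base `Δ`, highest root `θ = Σ m_α α` and
fundamental coweights `cw α = ω̌_α`, and let `A ∈ 𝓘` (i.e. `(Δ∖A) ∪ {α₀}` is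
connected, the affine node `α₀` being `-θ`).  Let
`V(A) = {β ∈ Φ | (ω̌_α, β) = m_α for all α ∈ A}` be the set of roots in the
standard parabolic face `F(A)` and let `β_A` be the root such that `V(A)` is
exactly the set of roots `β` with `β ≥ β_A` in the dominance order.  Then the
lattice generated by `V(A)` is `Z(V(A)) = ⟨Δ∖A, β_A⟩_ℤ`. -/
theorem face_lattice_eq
    (Φ : Finset E) (hΦ : IsRootSystem (↑Φ : Set E))
    (Δ : Finset E) (hΔΦ : (↑Δ : Set E) ⊆ (↑Φ : Set E))
    (hbase : ∀ β ∈ Φ, β ∈ AddSubmonoid.closure (↑Δ : Set E) ∨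
      -β ∈ AddSubmonoid.closure (↑Δ : Set E))
    (hind : LinearIndependent ℝ (fun x : (Δ : Set E) => (x : E)))
    (hirr : IsConnectedSet (↑Δ : Set E))
    (θ : E) (hθ : θ ∈ Φ) (hhigh : ∀ β ∈ Φ, θ - β ∈ AddSubmonoid.closure (↑Δ : Set E))
    (m : E → ℕ) (hm : θ = ∑ α ∈ Δ, (m α : ℝ) • α)
    (cw : E → E) (hcw : ∀ α ∈ Δ, ∀ β ∈ Δ, ⟪cw α, β⟫ = if α = β then 1 else 0)
    (A : Set E) (hAΔ : A ⊆ (↑Δ : Set E))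
    (hAI : IsConnectedSet (((↑Δ : Set E) \ A) ∪ {-θ}))
    (V : Set E) (hV : V = {β ∈ (↑Φ : Set E) | ∀ α ∈ A, ⟪cw α, β⟫ = (m α : ℝ)})
    (βA : E) (hβA : βA ∈ V)
    (hdom : ∀ β ∈ (↑Φ : Set E), β ∈ V ↔ β - βA ∈ AddSubmonoid.closure (↑Δ : Set E)) :
    AddSubgroup.closure V = AddSubgroup.closure (((↑Δ : Set E) \ A) ∪ {βA}) := by
  -- basic memberships
  have hVΦ : V ⊆ (↑Φ : Set E) := by rw [hV]; exact fun β hβ => hβ.1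
  have hVm : ∀ β ∈ V, ∀ α ∈ A, ⟪cw α, β⟫ = (m α : ℝ) := by
    rw [hV]; exact fun β hβ => hβ.2
  -- coweight pairing with a sum of simple roots
  have hpair : ∀ α ∈ A, ∀ c : E → ℝ, ⟪cw α, ∑ b ∈ Δ, c b • b⟫ = c α := by
    intro α hα c
    rw [inner_sum]
    rw [Finset.sum_congr rfl fun b hb => by
      rw [real_inner_smul_right, hcw α (Finset.mem_coe.mp (hAΔ hα)) b hb]]
    simp only [mul_ite, mul_one, mul_zero]
    rw [Finset.sum_ite_eq Δ α (fun b => c b), if_pos (Finset.mem_coe.mp (hAΔ hα))]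
  -- the highest root lies in V
  have hθV : θ ∈ V := by
    rw [hV]
    refine ⟨Finset.mem_coe.mpr hθ, fun α hα => ?_⟩
    rw [hm]
    exact hpair α hα _
  -- coweights for α ∈ A vanish on Δ \ A
  have hcw0 : ∀ α ∈ A, ∀ γ ∈ ((↑Δ : Set E) \ A), ⟪cw α, γ⟫ = 0 := by
    intro α hα γ hγ
    rw [hcw α (Finset.mem_coe.mp (hAΔ hα)) γ (Finset.mem_coe.mp hγ.1)]
    exact if_neg (fun h => hγ.2 (by rw [← h]; exact hα))
  -- V is stable under adding/subtracting roots of Δ \ A (within Φ)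
  have hVadd : ∀ β ∈ V, ∀ γ ∈ ((↑Δ : Set E) \ A), β + γ ∈ (↑Φ : Set E) → β + γ ∈ V := by
    intro β hβ γ hγ hmem
    rw [hV]
    exact ⟨hmem, fun α hα => by
      rw [inner_add_right, hVm β hβ α hα, hcw0 α hα γ hγ, add_zero]⟩
  have hVsub : ∀ β ∈ V, ∀ γ ∈ ((↑Δ : Set E) \ A), β - γ ∈ (↑Φ : Set E) → β - γ ∈ V := by
    intro β hβ γ hγ hmem
    rw [hV]
    exact ⟨hmem, fun α hα => by
      rw [inner_sub_right, hVm β hβ α hα, hcw0 α hα γ hγ, sub_zero]⟩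
  -- key step: a simple root in Δ \ A not orthogonal to some β ∈ V lies in ⟨V⟩
  have key : ∀ γ ∈ ((↑Δ : Set E) \ A), (∃ β ∈ V, ⟪γ, β⟫ ≠ 0) → γ ∈ AddSubgroup.closure V := by
    rintro γ hγ ⟨β, hβV, hne⟩
    have hβΦ : β ∈ (↑Φ : Set E) := hVΦ hβV
    have hγΦ : γ ∈ (↑Φ : Set E) := hΔΦ hγ.1
    by_cases h1 : β = γ
    · subst h1; exact AddSubgroup.subset_closure hβV
    by_cases h2 : β = -γ
    · have : γ = -β := by rw [h2, neg_neg]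
      rw [this]
      exact AddSubgroup.neg_mem _ (AddSubgroup.subset_closure hβV)
    rcases lt_or_gt_of_ne hne with hlt | hgt
    · have hsum : γ + β ∈ (↑Φ : Set E) := by
        refine rs_add_mem hΦ hγΦ hβΦ hlt ?_
        intro h; exact h2 (by rw [eq_neg_iff_add_eq_zero, add_comm]; exact h)
      have hmem : β + γ ∈ V := hVadd β hβV γ hγ (by rwa [add_comm])
      have : γ = (β + γ) - β := by abel
      rw [this]
      exact AddSubgroup.sub_mem _ (AddSubgroup.subset_closure hmem)
        (AddSubgroup.subset_closure hβV)
    · have hnγ : -γ ∈ (↑Φ : Set E) := rs_neg_mem hΦ hγΦ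
      have hsum : -γ + β ∈ (↑Φ : Set E) := by
        refine rs_add_mem hΦ hnγ hβΦ ?_ ?_
        · rw [inner_neg_left]; linarith
        · intro h; exact h1 (by rw [← sub_eq_zero]; rw [neg_add_eq_sub] at h; exact h)
      have hmem : β - γ ∈ V := hVsub β hβV γ hγ (by rwa [neg_add_eq_sub] at hsum)
      have : γ = β - (β - γ) := by abel
      rw [this]
      exact AddSubgroup.sub_mem _ (AddSubgroup.subset_closure hβV)
        (AddSubgroup.subset_closure hmem)
  -- every simple root in Δ \ A lies in ⟨V⟩, via connectivity through -θ
  have main : ∀ γ ∈ ((↑Δ : Set E) \ A), γ ∈ AddSubgroup.closure V := by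
    intro γ hγ
    have hchain := hAI γ (Or.inl hγ) (-θ) (Or.inr rfl)
    have step : ∀ x, Relation.ReflTransGen
        (fun a b => a ∈ (((↑Δ : Set E) \ A) ∪ {-θ}) ∧ b ∈ (((↑Δ : Set E) \ A) ∪ {-θ}) ∧
          ⟪a, b⟫ ≠ 0) x (-θ) → (x = -θ ∨ ∃ β ∈ V, ⟪x, β⟫ ≠ 0) := by
      intro x hx
      induction hx using Relation.ReflTransGen.head_induction_on with
      | refl => exact Or.inl rfl
      | @head a c hac hcb ih =>
        obtain ⟨haS, hcS, hne⟩ := hac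
        right
        rcases ih with rfl | ⟨β, hβV, hβne⟩
        · exact ⟨θ, hθV, by rw [inner_neg_right] at hne; exact fun h => hne (by rw [h, neg_zero])⟩
        · rcases hcS with hc | hc
          · have hcV : c ∈ AddSubgroup.closure V := key c hc ⟨β, hβV, hβne⟩
            exact exists_inner_ne hcV hne
          · rw [Set.mem_singleton_iff] at hc
            subst hc
            exact ⟨θ, hθV, by rw [inner_neg_right] at hne; exact fun h => hne (by rw [h, neg_zero])⟩
    rcases step γ hchain with h | h
    · rw [h]
      exact AddSubgroup.neg_mem _ (AddSubgroup.subset_closure hθV)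
    · exact key γ hγ h
  -- now プrove the two inclusions
  apply le_antisymm
  · rw [AddSubgroup.closure_le]
    intro β hβV
    have hβΦ : β ∈ (↑Φ : Set E) := hVΦ hβV
    have hd : β - βA ∈ AddSubmonoid.closure (↑Δ : Set E) := (hdom β hβΦ).mp hβV
    obtain ⟨c, hc⟩ := nat_span_repr Δ hd
    have hcA : ∀ α ∈ A, c α = 0 := by
      intro α hα
      have h0 : ⟪cw α, β - βA⟫ = 0 := by
        rw [inner_sub_right, hVm β hβV α hα, hVm βA hβA α hα, sub_self]
      rw [hc, hpair α hα (fun b => (c b : ℝ))] at h0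
      exact_mod_cast h0
    have hsub : β - βA ∈ AddSubgroup.closure (((↑Δ : Set E) \ A) ∪ {βA}) := by
      rw [hc]
      refine AddSubgroup.sum_mem _ fun α hα => ?_
      by_cases hαA : α ∈ A
      · rw [hcA α hαA]
        simpa using AddSubgroup.zero_mem _
      · have hα' : α ∈ ((↑Δ : Set E) \ A) ∪ {βA} := Or.inl ⟨Finset.mem_coe.mpr hα, hαA⟩
        rw [Nat.cast_smul_eq_nsmul ℝ]
        exact nsmul_mem (AddSubgroup.subset_closure hα') _
    have hβeq : β = βA + (β - βA) := by abel
    rw [hβeq]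
    exact AddSubgroup.add_mem _ (AddSubgroup.subset_closure (Or.inr rfl)) hsub
  · rw [AddSubgroup.closure_le]
    rintro x (hx | hx)
    · exact main x hx
    · rw [Set.mem_singleton_iff] at hx
      exact hx ▸ AddSubgroup.subset_closure hβA
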